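/- For any symmetric matrix W ∈ ℝ^{d×d}, the minimum of ‖U‖_F² + ‖V‖_F² over all U, V ∈ ℝ^{d×d} with U Uᵀ − V Vᵀ = W equals the nuclear norm ‖W‖_*. -/

import Mathlib

open Finset Matrix

lemma frob_eq {d : ℕ} (M : Matrix (Fin d) (Fin d) ℝ) :
    ∑ i, ∑ j, M i j ^ 2 = (Mᵀ * M).trace := by
  rw [Finset.sum_comm]
  simp [Matrix.trace, Matrix.mul_apply, Matrix.diag, sq]

lemma trace_diag_mul {d : ℕ} (s : Fin d → ℝ) (N : Matrix (Fin d) (Fin d) ℝ) :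
    (diagonal s * (N * Nᵀ)).trace = ∑ i, s i * ∑ j, N i j ^ 2 := by
  have h : ∀ B : Matrix (Fin d) (Fin d) ℝ, (diagonal s * B).trace = ∑ i, s i * B i i := by
    intro B
    simp [Matrix.trace, Matrix.diag, Matrix.diagonal_mul]
  rw [h]
  refine Finset.sum_congr rfl fun i _ => ?_
  simp [Matrix.mul_apply, sq]

/-- For a symmetric (Hermitian) real matrix `W`, the minimum of `‖U‖_F² + ‖V‖_F²`
over all `U, V` with `U Uᵀ − V Vᵀ = W` equals the nuclear norm of `W`, i.e. the sum
of the absolute values of its eigenvalues. -/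
theorem stmt10 (d : ℕ) (W : Matrix (Fin d) (Fin d) ℝ) (hW : W.IsHermitian) :
    IsLeast {r : ℝ | ∃ U V : Matrix (Fin d) (Fin d) ℝ,
        U * Uᵀ - V * Vᵀ = W ∧
        r = (∑ i, ∑ j, U i j ^ 2) + ∑ i, ∑ j, V i j ^ 2}
      (∑ i, |hW.eigenvalues i|) := by
  classical
  set Q : Matrix (Fin d) (Fin d) ℝ := (hW.eigenvectorUnitary : Matrix (Fin d) (Fin d) ℝ)
    with hQdef
  set lam : Fin d → ℝ := hW.eigenvalues with hlam
  have hQ1 : Qᵀ * Q = 1 := by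
    have h := hW.eigenvectorUnitary.2
    rw [Matrix.mem_unitaryGroup_iff'] at h
    simpa [hQdef, Matrix.star_eq_conjTranspose] using h
  have hQ2 : Q * Qᵀ = 1 := by
    have h := hW.eigenvectorUnitary.2
    rw [Matrix.mem_unitaryGroup_iff] at h
    simpa [hQdef, Matrix.star_eq_conjTranspose] using h
  have hspec : W = Q * diagonal lam * Qᵀ := by
    have := hW.spectral_theorem
    simpa [hQdef, hlam, Matrix.star_eq_conjTranspose, Function.comp] using this
  -- sum of squares of Qᵀ * M equals that of M
  have hinv : ∀ M : Matrix (Fin d) (Fin d) ℝ,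
      ∑ i, ∑ j, (Qᵀ * M) i j ^ 2 = ∑ i, ∑ j, M i j ^ 2 := by
    intro M
    rw [frob_eq, frob_eq]
    have h : (Qᵀ * M)ᵀ * (Qᵀ * M) = Mᵀ * M := by
      rw [Matrix.transpose_mul, Matrix.transpose_transpose, Matrix.mul_assoc,
        ← Matrix.mul_assoc Q, hQ2, Matrix.one_mul]
    rw [h]
  -- trace of (Q * diagonal s * Qᵀ) * (M * Mᵀ)
  have htr : ∀ (s : Fin d → ℝ) (M : Matrix (Fin d) (Fin d) ℝ),
      (Q * diagonal s * Qᵀ * (M * Mᵀ)).trace = ∑ i, s i * ∑ j, (Qᵀ * M) i j ^ 2 := by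
    intro s M
    rw [show Q * diagonal s * Qᵀ * (M * Mᵀ) = Q * (diagonal s * (Qᵀ * (M * Mᵀ))) by
      simp only [Matrix.mul_assoc]]
    rw [Matrix.trace_mul_comm]
    rw [show diagonal s * (Qᵀ * (M * Mᵀ)) * Q = diagonal s * ((Qᵀ * M) * (Qᵀ * M)ᵀ) by
      rw [Matrix.transpose_mul, Matrix.transpose_transpose]; simp only [Matrix.mul_assoc]]
    exact trace_diag_mul s (Qᵀ * M)
  -- sum of squares of Q * diagonal f
  have hsum : ∀ f : Fin d → ℝ,
      ∑ i, ∑ j, (Q * diagonal f) i j ^ 2 = ∑ i, f i * f i := by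
    intro f
    rw [frob_eq, Matrix.transpose_mul, Matrix.diagonal_transpose]
    rw [show diagonal f * Qᵀ * (Q * diagonal f) = diagonal f * (Qᵀ * Q) * diagonal f by
      simp only [Matrix.mul_assoc]]
    rw [hQ1, Matrix.mul_one, Matrix.diagonal_mul_diagonal]
    simp [Matrix.trace_diagonal]
  constructor
  · -- membership : construct U, V
    refine ⟨Q * diagonal (fun i => Real.sqrt (max (lam i) 0)),
      Q * diagonal (fun i => Real.sqrt (max (-lam i) 0)), ?_, ?_⟩
    · have hU : ∀ f : Fin d → ℝ,
          (Q * diagonal f) * (Q * diagonal f)ᵀ = Q * diagonal (fun i => f i * f i) * Qᵀ := by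
        intro f
        rw [Matrix.transpose_mul, Matrix.diagonal_transpose]
        rw [show Q * diagonal f * (diagonal f * Qᵀ) =
          Q * (diagonal f * diagonal f) * Qᵀ by simp only [Matrix.mul_assoc]]
        rw [Matrix.diagonal_mul_diagonal]
      rw [hU, hU, hspec, ← Matrix.sub_mul, ← Matrix.mul_sub, Matrix.diagonal_sub]
      have hfun : (fun i => Real.sqrt (max (lam i) 0) * Real.sqrt (max (lam i) 0) -
          Real.sqrt (max (-lam i) 0) * Real.sqrt (max (-lam i) 0)) = lam := by
        funext i
        rw [Real.mul_self_sqrt (le_max_right _ _), Real.mul_self_sqrt (le_max_right _ _)]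
        rcases le_total (lam i) 0 with h | h
        · simp [max_eq_right h, max_eq_left (neg_nonneg.mpr h)]
        · simp [max_eq_left h, max_eq_right (neg_nonpos.mpr h)]
      rw [hfun]
    · rw [hsum _, hsum _, ← Finset.sum_add_distrib]
      refine Finset.sum_congr rfl fun i _ => ?_
      rw [Real.mul_self_sqrt (le_max_right _ _), Real.mul_self_sqrt (le_max_right _ _)]
      rcases le_total (lam i) 0 with h | h
      · simp [max_eq_right h, max_eq_left (neg_nonneg.mpr h), abs_of_nonpos h]
      · simp [max_eq_left h, max_eq_right (neg_nonpos.mpr h), abs_of_nonneg h]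
  · -- lower bound
    rintro r ⟨U, V, hUV, hr⟩
    set s : Fin d → ℝ := fun i => if lam i < 0 then -1 else 1 with hs
    have hSW : (Q * diagonal s * Qᵀ * W).trace = ∑ i, |lam i| := by
      rw [hspec]
      rw [show Q * diagonal s * Qᵀ * (Q * diagonal lam * Qᵀ) =
          Q * (diagonal s * ((Qᵀ * Q) * (diagonal lam * Qᵀ))) by simp only [Matrix.mul_assoc]]
      rw [hQ1, Matrix.one_mul, Matrix.trace_mul_comm]
      rw [show diagonal s * (diagonal lam * Qᵀ) * Q = diagonal s * diagonal lam * (Qᵀ * Q) by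
        simp only [Matrix.mul_assoc]]
      rw [hQ1, Matrix.mul_one, Matrix.diagonal_mul_diagonal, Matrix.trace_diagonal]
      refine Finset.sum_congr rfl fun i _ => ?_
      rcases lt_or_ge (lam i) 0 with h | h
      · simp [hs, h, abs_of_neg h]
      · simp [hs, not_lt.mpr h, abs_of_nonneg h]
    have hexp : (Q * diagonal s * Qᵀ * W).trace =
        (∑ i, s i * ∑ j, (Qᵀ * U) i j ^ 2) - ∑ i, s i * ∑ j, (Qᵀ * V) i j ^ 2 := by
      rw [← hUV, Matrix.mul_sub, Matrix.trace_sub, htr s U, htr s V]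
    have hbound1 : (∑ i, s i * ∑ j, (Qᵀ * U) i j ^ 2) ≤ ∑ i, ∑ j, (Qᵀ * U) i j ^ 2 := by
      refine Finset.sum_le_sum fun i _ => ?_
      have hpos : (0:ℝ) ≤ ∑ j, (Qᵀ * U) i j ^ 2 :=
        Finset.sum_nonneg fun j _ => sq_nonneg _
      have h1 : s i ≤ 1 := by
        by_cases h : lam i < 0 <;> simp [hs, h]
      have := mul_le_mul_of_nonneg_right h1 hpos
      linarith
    have hbound2 : -(∑ i, s i * ∑ j, (Qᵀ * V) i j ^ 2) ≤ ∑ i, ∑ j, (Qᵀ * V) i j ^ 2 := by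
      have h := Finset.sum_le_sum (s := Finset.univ)
        (f := fun i => -(s i * ∑ j, (Qᵀ * V) i j ^ 2))
        (g := fun i => ∑ j, (Qᵀ * V) i j ^ 2) ?_
      · simpa using h
      · intro i _
        show -(s i * ∑ j, (Qᵀ * V) i j ^ 2) ≤ ∑ j, (Qᵀ * V) i j ^ 2
        have hpos : (0:ℝ) ≤ ∑ j, (Qᵀ * V) i j ^ 2 :=
          Finset.sum_nonneg fun j _ => sq_nonneg _
        have h1 : -1 ≤ s i := by
          by_cases h : lam i < 0 <;> simp [hs, h]
        have := mul_le_mul_of_nonneg_right h1 hpos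
        linarith
    have hfin : ∑ i, |lam i| ≤
        (∑ i, ∑ j, (Qᵀ * U) i j ^ 2) + ∑ i, ∑ j, (Qᵀ * V) i j ^ 2 := by
      rw [← hSW, hexp]; linarith
    rw [hinv U, hinv V] at hfin
    rw [hr]
    exact hfin
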